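/- arXiv:2404.18783 — 2 statements merged into one kernel-verified Lean document; each statement's English description precedes it below -/
import Mathlib

section
/- Let E be a d-uniform hypergraph on [n], let c ∈ [1, 3/2) be a constant and v a positive integer with v < d ≤ 3v/(2c). Then any E-separable binary code (equivalently, E-separable family of subsets of [t]) has length t ≥ (v / (c(d − v/c)·log₂(e·v/(c(d − v/c))))) · log₂(|E| / n^{v/c}). -/
theorem stmt8 {n t d v : ℕ} (E : Finset (Finset (Fin n))) (G : Fin n → Finset (Fin t))
    (hunif : ∀ e ∈ E, e.card = d)
    (hsep : ∀ e ∈ E, ∀ e' ∈ E, e ≠ e' → e.biUnion G ≠ e'.biUnion G)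
    (c : ℝ) (hc1 : 1 ≤ c) (hc2 : c < 3 / 2)
    (hv : 0 < v) (hvd : v < d) (hd : (d : ℝ) ≤ 3 * v / (2 * c)) :
    (t : ℝ) ≥
      ((v : ℝ) /
          (c * ((d : ℝ) - v / c) * Real.logb 2 (Real.exp 1 * v / (c * ((d : ℝ) - v / c))))) *
        Real.logb 2 ((E.card : ℝ) / (n : ℝ) ^ ((v : ℝ) / c)) := by
  classical
  have hc0 : (0:ℝ) < c := lt_of_lt_of_le one_pos hc1
  have hv' : (0:ℝ) < v := by exact_mod_cast hv
  have hvd' : (v:ℝ) < d := by exact_mod_cast hvd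
  set u : ℝ := c * ((d:ℝ) - v / c) with hu_def
  clear_value u
  have hu_eq : u = c * d - v := by
    rw [hu_def]; field_simp
  have hu_pos : 0 < u := by
    rw [hu_eq]; nlinarith
  have hu_le : u ≤ v / 2 := by
    have h2c : (0:ℝ) < 2 * c := by linarith
    have hcd : (d:ℝ) * (2 * c) ≤ 3 * v := (le_div_iff₀ h2c).mp hd
    rw [hu_eq]; nlinarith
  set W := Real.logb 2 (Real.exp 1 * v / u) with hW_def
  clear_value W
  have he2 : (2:ℝ) ≤ Real.exp 1 := by
    have := Real.exp_one_gt_d9; linarith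
  have hW2 : 2 ≤ W := by
    have h2 : (2:ℝ) ≤ (v:ℝ) / u := by
      rw [le_div_iff₀ hu_pos]; linarith
    have h4 : (4:ℝ) ≤ Real.exp 1 * v / u := by
      calc (4:ℝ) = 2 * 2 := by norm_num
        _ ≤ Real.exp 1 * ((v:ℝ) / u) :=
            mul_le_mul he2 h2 (by norm_num) (le_trans (by norm_num) he2)
        _ = Real.exp 1 * v / u := by ring
    have hlog4 : Real.logb 2 4 = 2 := by
      rw [show (4:ℝ) = 2 ^ (2:ℕ) by norm_num, Real.logb_pow]
      simp
    calc (2:ℝ) = Real.logb 2 4 := hlog4.symm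
      _ ≤ W := by rw [hW_def]; exact Real.logb_le_logb_of_le one_lt_two (by norm_num) h4
  have hW0 : (0:ℝ) < W := lt_of_lt_of_le two_pos hW2
  set K := (v:ℝ) / (u * W) with hK_def
  clear_value K
  have hK0 : 0 < K := by rw [hK_def]; exact div_pos hv' (mul_pos hu_pos hW0)
  set q := (E.card : ℝ) / (n:ℝ) ^ ((v:ℝ)/c) with hq
  clear_value q
  rw [ge_iff_le]
  by_cases hq0 : Real.logb 2 q ≤ 0
  · have h1 : K * Real.logb 2 q ≤ 0 := mul_nonpos_of_nonneg_of_nonpos hK0.le hq0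
    have ht : (0:ℝ) ≤ t := Nat.cast_nonneg t
    linarith
  push_neg at hq0
  have hq_nonneg : 0 ≤ q := by
    rw [hq]
    exact div_nonneg (Nat.cast_nonneg _) (Real.rpow_nonneg (Nat.cast_nonneg _) _)
  have hq1 : 1 < q := by
    by_contra h
    push_neg at h
    have : Real.logb 2 q ≤ 0 := Real.logb_nonpos one_lt_two hq_nonneg h
    linarith
  have hE1 : (1:ℝ) ≤ (E.card:ℝ) := by
    rcases Nat.eq_zero_or_pos E.card with h0 | h1
    · exfalso
      rw [hq, h0] at hq1
      simp at hq1
      linarith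
    · exact_mod_cast h1
  have hEne : E.Nonempty := Finset.card_pos.mp (by exact_mod_cast hE1)
  obtain ⟨e0, he0⟩ := hEne
  have hdn : d ≤ n := by
    have h1 := hunif e0 he0
    have h2 : e0.card ≤ (Finset.univ : Finset (Fin n)).card :=
      Finset.card_le_card (Finset.subset_univ _)
    simpa [h1] using h2
  have hn1 : 1 ≤ n := le_trans (by omega) hdn
  have hcard2 : E.card ≤ 2 ^ t := by
    have hinj : Set.InjOn (fun e : Finset (Fin n) => e.biUnion G) (E : Set (Finset (Fin n))) := by
      intro a ha b hb hab
      by_contra hne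
      exact hsep a ha b hb hne hab
    calc E.card = (E.image (fun e : Finset (Fin n) => e.biUnion G)).card :=
          (Finset.card_image_of_injOn hinj).symm
      _ ≤ Fintype.card (Finset (Fin t)) := Finset.card_le_univ _
      _ = 2 ^ t := by simp [Fintype.card_finset]
  have hcardn : E.card ≤ n ^ d := by
    calc E.card ≤ ((Finset.univ : Finset (Fin n)).powersetCard d).card := by
          apply Finset.card_le_card
          intro e he
          rw [Finset.mem_powersetCard]
          exact ⟨Finset.subset_univ _, hunif e he⟩
      _ = n.choose d := by simp [Finset.card_powersetCard]
      _ ≤ n ^ d := Nat.choose_le_pow n d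
  set L := Real.logb 2 (E.card:ℝ) with hL_def
  clear_value L
  set N := Real.logb 2 (n:ℝ) with hN_def
  clear_value N
  have hN0 : 0 ≤ N := by rw [hN_def]; exact Real.logb_nonneg one_lt_two (by exact_mod_cast hn1)
  have hL0 : 0 ≤ L := by rw [hL_def]; exact Real.logb_nonneg one_lt_two hE1
  have hLt : L ≤ t := by
    have h1 : (E.card:ℝ) ≤ (2:ℝ) ^ (t:ℕ) := by exact_mod_cast hcard2
    rw [hL_def]
    calc Real.logb 2 (E.card:ℝ) ≤ Real.logb 2 ((2:ℝ) ^ (t:ℕ)) :=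
          Real.logb_le_logb_of_le one_lt_two (by linarith) h1
      _ = t := by rw [Real.logb_pow]; simp
  have hLn : L ≤ d * N := by
    have h1 : (E.card:ℝ) ≤ (n:ℝ) ^ (d:ℕ) := by exact_mod_cast hcardn
    rw [hL_def, hN_def]
    calc Real.logb 2 (E.card:ℝ) ≤ Real.logb 2 ((n:ℝ) ^ (d:ℕ)) :=
          Real.logb_le_logb_of_le one_lt_two (by linarith) h1
      _ = d * Real.logb 2 (n:ℝ) := by rw [Real.logb_pow]
  have hnpos : (0:ℝ) < n := by exact_mod_cast hn1
  have hlogq : Real.logb 2 q = L - (v/c) * N := by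
    rw [hq, Real.logb_div (by linarith) (ne_of_gt (Real.rpow_pos_of_pos hnpos _)), hL_def, hN_def]
    have h1 : Real.logb 2 ((n:ℝ) ^ ((v:ℝ)/c)) = (v/c) * Real.logb 2 (n:ℝ) := by
      rw [Real.logb, Real.logb, Real.log_rpow hnpos]
      ring
    rw [h1]
  rw [hlogq]
  have hdvc_eq : (d:ℝ) - v/c = u / c := by
    rw [hu_def]; field_simp
  have hKey : K * ((d:ℝ) - v/c) ≤ d := by
    have heq : K * ((d:ℝ) - v/c) = (v:ℝ) / (c * W) := by
      rw [hK_def, hdvc_eq]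
      field_simp
    rw [heq, div_le_iff₀ (by positivity)]
    have hcW : 2 ≤ c * W := by
      have := mul_le_mul hc1 hW2 (by norm_num) hc0.le
      linarith
    have h1 : (d:ℝ) * 1 ≤ (d:ℝ) * (c * W) :=
      mul_le_mul_of_nonneg_left (by linarith) (by linarith)
    linarith
  have hvcN : 0 ≤ (v/c) * N := by positivity
  have hexp : K * ((d:ℝ) - v/c) = K * d - K * (v/c) := by ring
  rcases le_or_gt K 1 with hK1 | hK1
  · have h1 : L - v/c * N ≤ L := by linarith
    have h2 : K * (L - v/c * N) ≤ K * L := mul_le_mul_of_nonneg_left h1 hK0.le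
    have h3 : K * L ≤ 1 * L := mul_le_mul_of_nonneg_right hK1 hL0
    rw [one_mul] at h3
    linarith
  · have h3 : (K - 1) * d ≤ K * (v/c) := by linarith
    have h4 : (K - 1) * d * N ≤ K * (v/c) * N := mul_le_mul_of_nonneg_right h3 hN0
    have h2 : (K - 1) * L ≤ (K - 1) * (d * N) :=
      mul_le_mul_of_nonneg_left hLn (by linarith)
    have e1 : K * (L - v/c * N) = (K - 1) * L + L - K * (v/c) * N := by ring
    have e2 : (K - 1) * (d * N) = (K - 1) * d * N := by ring
    linarith
end

section
/- Let E be a collection of d-element subsets of [n] whose pairwise intersections have size at most λ̄, with λ̄ < d ≤ 3λ̄/(2c) for a constant c ∈ [1, 3/2). Then any E-separable code has length at least (λ̄ / (c(d − λ̄/c)·log₂(e·λ̄/(c(d − λ̄/c))))) · log₂(|E| / n^{λ̄/c}). -/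
set_option maxHeartbeats 1000000 in
theorem stmt9 {n t d lam : ℕ} (E : Finset (Finset (Fin n))) (G : Fin n → Finset (Fin t))
    (hunif : ∀ e ∈ E, e.card = d)
    (hint : ∀ e ∈ E, ∀ e' ∈ E, e ≠ e' → (e ∩ e').card ≤ lam)
    (hsep : ∀ e ∈ E, ∀ e' ∈ E, e ≠ e' → e.biUnion G ≠ e'.biUnion G)
    (c : ℝ) (hc1 : 1 ≤ c) (hc2 : c < 3 / 2)
    (hlam : 0 < lam) (hlamd : lam < d) (hd : (d : ℝ) ≤ 3 * lam / (2 * c)) :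
    (t : ℝ) ≥
      ((lam : ℝ) /
          (c * ((d : ℝ) - lam / c) *
            Real.logb 2 (Real.exp 1 * lam / (c * ((d : ℝ) - lam / c))))) *
        Real.logb 2 ((E.card : ℝ) / (n : ℝ) ^ ((lam : ℝ) / c)) := by
  have hc0 : (0:ℝ) < c := by linarith
  have hlamR : (0:ℝ) < lam := by exact_mod_cast hlam
  have hdR : (lam:ℝ) < d := by exact_mod_cast hlamd
  have hdR0 : (0:ℝ) < d := lt_trans hlamR hdR
  set B : ℝ := c * ((d : ℝ) - lam / c) with hBdef
  have hBeq : B = c * d - lam := by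
    rw [hBdef]; field_simp
  have hBpos : 0 < B := by rw [hBeq]; nlinarith
  have h2cd : (d:ℝ) * (2*c) ≤ 3 * lam := (le_div_iff₀ (by positivity)).mp hd
  have hB2 : 2 * B ≤ lam := by rw [hBeq]; nlinarith
  have hlamcd : (lam:ℝ) ≤ c * d := by nlinarith
  set LB : ℝ := Real.logb 2 (Real.exp 1 * lam / B) with hLBdef
  have hLB : 2 ≤ LB := by
    have harg : (4:ℝ) ≤ Real.exp 1 * lam / B := by
      rw [le_div_iff₀ hBpos]
      nlinarith [Real.exp_one_gt_d9]
    have h4 : Real.logb 2 (4:ℝ) = 2 := by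
      rw [show (4:ℝ) = 2 ^ (2:ℕ) by norm_num, Real.logb_pow]
      simp [Real.logb_self_eq_one]
    calc (2:ℝ) = Real.logb 2 4 := h4.symm
      _ ≤ _ := Real.logb_le_logb_of_le (by norm_num) (by norm_num) harg
  rw [ge_iff_le]
  rcases Nat.eq_zero_or_pos E.card with hE0 | hEpos
  · rw [hE0]
    simp only [Nat.cast_zero, zero_div, Real.logb_zero, mul_zero]
    positivity
  · -- n ≥ 1
    obtain ⟨e, he⟩ := Finset.card_pos.mp hEpos
    have hn0 : 0 < n := by
      have hcard : e.card = d := hunif e he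
      have : 0 < e.card := by omega
      obtain ⟨x, _⟩ := Finset.card_pos.mp this
      exact x.pos
    -- |E| ≤ 2^t
    have hE2 : E.card ≤ 2 ^ t := by
      have hinj : Set.InjOn (fun a : Finset (Fin n) => a.biUnion G) ↑E := by
        intro a ha b hb hab
        by_contra hne
        exact hsep a ha b hb hne hab
      have := Finset.card_le_card_of_injOn (fun a : Finset (Fin n) => a.biUnion G)
        (fun _ _ => Finset.mem_univ _) hinj
      simpa [Finset.card_univ, Fintype.card_finset, Fintype.card_fin] using this
    -- |E| ≤ n^d
    have hEn : E.card ≤ n ^ d := by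
      have hsub : E ⊆ Finset.powersetCard d Finset.univ := by
        intro a ha
        rw [Finset.mem_powersetCard]
        exact ⟨Finset.subset_univ _, hunif a ha⟩
      have := Finset.card_le_card hsub
      rw [Finset.card_powersetCard, Finset.card_univ, Fintype.card_fin] at this
      exact this.trans (Nat.choose_le_pow n d)
    set L : ℝ := Real.logb 2 (E.card) with hLdef
    set N : ℝ := Real.logb 2 (n) with hNdef
    have hN0 : 0 ≤ N := Real.logb_nonneg (by norm_num) (by exact_mod_cast hn0)
    have hT0 : (0:ℝ) ≤ t := Nat.cast_nonneg t
    have hEposR : (0:ℝ) < E.card := by exact_mod_cast hEpos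
    have h1 : L ≤ (t:ℝ) := by
      calc L ≤ Real.logb 2 ((2:ℝ) ^ t) := by
            apply Real.logb_le_logb_of_le (by norm_num) hEposR
            exact_mod_cast hE2
        _ = t := by rw [Real.logb_pow]; simp [Real.logb_self_eq_one]
    have h2 : L ≤ (d:ℝ) * N := by
      calc L ≤ Real.logb 2 ((n:ℝ) ^ d) := by
            apply Real.logb_le_logb_of_le (by norm_num) hEposR
            exact_mod_cast hEn
        _ = d * N := by rw [Real.logb_pow]
    have harg : Real.logb 2 ((E.card : ℝ) / (n : ℝ) ^ ((lam : ℝ) / c))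
        = L - (lam/c) * N := by
      rw [Real.logb_div (ne_of_gt hEposR) (by positivity),
        Real.logb_rpow_eq_mul_logb_of_pos (by exact_mod_cast hn0)]
    rw [harg, div_mul_eq_mul_div, div_le_iff₀ (by positivity)]
    -- goal: lam * (L - lam/c * N) ≤ t * (B * LB)
    have hkey : (c*d) * L ≤ B * t + lam * ((d:ℝ) * N) := by
      nlinarith [mul_le_mul_of_nonneg_left h1 hBpos.le,
        mul_le_mul_of_nonneg_left h2 hlamR.le]
    -- multiply goal by c*d > 0
    have hmain : (c*d) * ((lam:ℝ) * (L - lam/c * N)) ≤ (c*d) * ((t:ℝ) * (B * LB)) := by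
      have hexp : (c*d) * ((lam:ℝ) * (L - lam/c * N))
          = lam * ((c*d) * L) - lam * (lam * ((d:ℝ) * N)) := by
        field_simp
      rw [hexp]
      have hstep1 : lam * ((c*d) * L) - lam * (lam * ((d:ℝ) * N))
          ≤ lam * (B * t) := by
        nlinarith [mul_le_mul_of_nonneg_left hkey hlamR.le]
      refine hstep1.trans ?_
      -- lam * (B*t) ≤ c*d * (t * (B * LB)) : since lam ≤ c*d ≤ c*d*LB
      nlinarith [mul_nonneg (mul_nonneg hBpos.le hT0) (by linarith : (0:ℝ) ≤ c*d - lam),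
        mul_nonneg (mul_nonneg (mul_nonneg (by positivity : (0:ℝ) ≤ c*d) hBpos.le) hT0)
          (by linarith : (0:ℝ) ≤ LB - 1)]
    exact le_of_mul_le_mul_left hmain (by positivity)
end
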